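/- For all s ≥ 2, all j' ≥ 1, all n ≥ 1, and all m with 1 ≤ m ≤ 2^{j'}: λ_s(n,m) ≤ 2^{s−1}·n + (j')^{s−2}·(m−1). -/

import Mathlib

open List


/-- Alternating list `a b a b ⋯` of the given length. -/
def altList : ℕ → ℕ → ℕ → List ℕ
  | 0, _, _ => []
  | (k+1), a, b => a :: altList k b a

/-- An order-`s` Davenport–Schinzel sequence: it contains no (not necessarily
contiguous) subsequence `a b a b ⋯` of length `s+2` over two distinct symbols. -/
def IsDS (s : ℕ) (S : List ℕ) : Prop :=
  ∀ a b : ℕ, a ≠ b → ¬ (altList (s + 2) a b).Sublist S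

/-- 2-sparse: no two equal adjacent symbols. -/
def Sparse2 (S : List ℕ) : Prop := S.Chain' (· ≠ ·)

/-- `S` can be partitioned into at most `m` blocks
(contiguous runs of pairwise distinct symbols). -/
def Blocked (m : ℕ) (S : List ℕ) : Prop :=
  ∃ Bs : List (List ℕ), Bs.length ≤ m ∧ (∀ B ∈ Bs, B.Nodup) ∧ S = Bs.flatten

/-- `λ_s(n)`: maximum length of a 2-sparse order-`s` DS sequence over an
alphabet of `n` symbols. -/
noncomputable def lamS (s n : ℕ) : ℕ :=
  sSup {l : ℕ | ∃ S : List ℕ, IsDS s S ∧ Sparse2 S ∧ S.toFinset.card ≤ n ∧ S.length = l}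

/-- `λ_s(n,m)`: maximum length of an order-`s` DS sequence over an alphabet of
`n` symbols that can be partitioned into at most `m` blocks. -/
noncomputable def lamB (s n m : ℕ) : ℕ :=
  sSup {l : ℕ | ∃ S : List ℕ, IsDS s S ∧ S.toFinset.card ≤ n ∧ Blocked m S ∧ S.length = l}


lemma altList_succ_append (k a b : ℕ) :
    altList (k+1) a b = altList k a b ++ [if k % 2 = 0 then a else b] := by
  induction k generalizing a b with
  | zero => simp [altList]
  | succ k ih =>
    show a :: altList (k+1) b a = (a :: altList k b a) ++ _
    rw [ih b a]
    rcases Nat.mod_two_eq_zero_or_one k with h | h <;>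
      simp [altList, h, Nat.add_mod, List.cons_append]
lemma altList_two (a b : ℕ) : altList 2 a b = [a, b] := rfl
lemma mem_altList_fst (k a b : ℕ) : a ∈ altList (k+1) a b := by
  show a ∈ a :: _; simp
lemma mem_altList_snd (k a b : ℕ) : b ∈ altList (k+2) a b := by
  show b ∈ a :: b :: _; simp

lemma IsDS.sublist {s : ℕ} {S T : List ℕ} (h : IsDS s S) (hT : T <+ S) : IsDS s T :=
  fun a b hab hsub => h a b hab (hsub.trans hT)

/-- Left-globals reduction: symbols of `L` that also occur in `R` form an order-`s` DS
sequence if `L ++ R` is order `s+1`, provided `1 ≤ s`. -/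
lemma globals_left {s : ℕ} (hs : 1 ≤ s) {L R : List ℕ}
    (h : IsDS (s+1) (L ++ R)) :
    IsDS s (L.filter (fun x => decide (x ∈ R.toFinset))) := by
  intro a b hab hsub
  set F := L.filter (fun x => decide (x ∈ R.toFinset)) with hF
  have hmem : ∀ x ∈ F, x ∈ R := by
    intro x hx
    have := List.of_mem_filter hx
    simpa using this
  have haR : a ∈ R := hmem a (hsub.mem (mem_altList_fst _ a b))
  have hbR : b ∈ R := hmem b (hsub.mem (mem_altList_snd _ a b))
  apply h a b hab
  have h1 : altList (s + 1 + 2) a b = altList (s+2) a b ++ [if (s+2) % 2 = 0 then a else b] := by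
    rw [show s + 1 + 2 = (s + 2) + 1 by ring, altList_succ_append]
  rw [h1]
  have hc : (if (s+2) % 2 = 0 then a else b) ∈ R := by
    split <;> assumption
  exact (hsub.trans (List.filter_sublist (l := L))).append (List.singleton_sublist.mpr hc)

lemma globals_right {s : ℕ} {L R : List ℕ}
    (h : IsDS (s+1) (L ++ R)) :
    IsDS s (R.filter (fun x => decide (x ∈ L.toFinset))) := by
  intro a b hab hsub
  have hbL : b ∈ L := by
    have := List.of_mem_filter (hsub.mem (mem_altList_snd _ a b))
    simpa using this
  apply h b a hab.symm
  show (b :: altList (s+2) a b) <+ L ++ R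
  have : [b] ++ altList (s+2) a b <+ L ++ R :=
    (List.singleton_sublist.mpr hbL).append (hsub.trans (List.filter_sublist (l := R)))
  simpa using this


lemma flatten_filter (p : ℕ → Bool) (Bs : List (List ℕ)) :
    Bs.flatten.filter p = (Bs.map (·.filter p)).flatten := by
  induction Bs with
  | nil => simp
  | cons B Bs ih => simp [List.filter_append, ih]

lemma Blocked.filter {m : ℕ} {S : List ℕ} (h : Blocked m S) (p : ℕ → Bool) :
    Blocked m (S.filter p) := by
  obtain ⟨Bs, hlen, hnd, rfl⟩ := h
  exact ⟨Bs.map (·.filter p), by simpa using hlen,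
    by intro B hB; simp only [List.mem_map] at hB; obtain ⟨C, hC, rfl⟩ := hB
       exact (hnd C hC).filter p,
    flatten_filter p Bs⟩

lemma length_filter_partition (p : ℕ → Bool) (l : List ℕ) :
    (l.filter p).length + (l.filter (fun x => ! p x)).length = l.length := by
  induction l with
  | nil => simp
  | cons a l ih => by_cases h : p a <;> simp [List.filter_cons, h, ← ih] <;> omega

/-- Collapsing adjacent equal elements: from a blocked sequence extract a 2-sparse
sublist losing at most `m - 1` elements. -/
lemma collapse {m : ℕ} {S : List ℕ} (h : Blocked m S) :
    ∃ T : List ℕ, T <+ S ∧ Sparse2 T ∧ S.length ≤ T.length + (m - 1) ∧ (S ≠ [] → T ≠ []) := by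
  obtain ⟨Bs, hlen, hnd, rfl⟩ := h
  suffices H : ∃ T : List ℕ, T <+ Bs.flatten ∧ Sparse2 T ∧
      Bs.flatten.length ≤ T.length + (Bs.length - 1) ∧ (Bs.flatten ≠ [] → T ≠ []) by
    obtain ⟨T, h1, h2, h3, h4⟩ := H
    exact ⟨T, h1, h2, h3.trans (by omega), h4⟩
  clear hlen
  induction Bs with
  | nil => exact ⟨[], by simp, List.isChain_nil, by simp, by simp⟩
  | cons B Bs ih =>
    obtain ⟨T, hsub, hsp, hlenT, hne⟩ := ih (fun C hC => hnd C (by simp [hC]))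
    have hndB : B.Nodup := hnd B (by simp)
    have hchB : B.Chain' (· ≠ ·) := hndB.isChain
    by_cases hjem : ∃ x, B.getLast? = some x ∧ T.head? = some x
    · -- drop head of T
      obtain ⟨x, hBl, hTh⟩ := hjem
      have hTne : T ≠ [] := by intro h; rw [h] at hTh; simp at hTh
      have hTpos : 1 ≤ T.length := List.length_pos_iff.mpr hTne
      have hFne : Bs.flatten ≠ [] := by
        intro h; rw [h] at hsub; exact hTne (List.sublist_nil.mp hsub)
      have hBspos : 1 ≤ Bs.length := by
        cases Bs with
        | nil => simp at hFne
        | cons _ _ => simp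
      refine ⟨B ++ T.tail, ?_, ?_, ?_, ?_⟩
      · exact ((T.tail_sublist).trans hsub).append_left B
      · rw [Sparse2] at *
        show List.IsChain _ _; rw [List.isChain_append]
        refine ⟨hchB, hsp.tail, ?_⟩
        intro y hy z hz
        rw [hBl] at hy
        rw [Option.mem_some_iff] at hy
        subst hy
        obtain ⟨T', rfl⟩ : ∃ T', T = x :: T' := by
          cases T with
          | nil => simp at hTh
          | cons a T' =>
            rw [List.head?_cons, Option.some_inj] at hTh
            exact ⟨T', by rw [hTh]⟩
        simp only [List.tail_cons] at hz
        exact (List.isChain_cons.mp hsp).1 z hz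
      · have ht : T.tail.length = T.length - 1 := List.length_tail (l := T)
        simp only [List.flatten_cons, List.length_append]
        simp only [List.length_cons]
        omega
      · intro _
        have hBne2 : B ≠ [] := by intro h; rw [h] at hBl; simp at hBl
        simp [hBne2]
    · refine ⟨B ++ T, hsub.append_left B, ?_, ?_, ?_⟩
      · rw [Sparse2] at *
        show List.IsChain _ _; rw [List.isChain_append]
        refine ⟨hchB, hsp, ?_⟩
        intro y hy z hz hyz
        exact hjem ⟨y, hy, by rw [← hyz] at hz; exact hz⟩
      · simp only [List.flatten_cons, List.length_append] at *
        simp only [List.length_cons]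
        omega
      · intro hne2
        intro hcon
        rcases List.append_eq_nil_iff.mp hcon with ⟨hB0, hT0⟩
        subst hB0
        have : Bs.flatten ≠ [] := by simpa using hne2
        exact (hne this) hT0


lemma first_occ_split {a : ℕ} {l : List ℕ} (h : a ∈ l) :
    ∃ I t, l = I ++ a :: t ∧ ∀ b ∈ I, b ≠ a := by
  induction l with
  | nil => simp at h
  | cons c l ih =>
    by_cases hc : c = a
    · exact ⟨[], l, by simp [hc], by simp⟩
    · have : a ∈ l := by
        rcases List.mem_cons.mp h with h | h
        · exact absurd h.symm hc
        · exact h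
      obtain ⟨I, t, rfl, hI⟩ := ih this
      exact ⟨c :: I, t, by simp, by
        intro b hb
        rcases List.mem_cons.mp hb with rfl | hb
        · exact hc
        · exact hI b hb⟩

/-- Tight bound for 2-sparse order-2 DS sequences: `|S| + 1 ≤ 2n`. -/
lemma sparse_lam2 (N : ℕ) : ∀ S : List ℕ, S.length ≤ N → Sparse2 S → IsDS 2 S →
    S ≠ [] → S.length + 1 ≤ 2 * S.toFinset.card := by
  induction N with
  | zero =>
    intro S hlen _ _ hne
    exact absurd (List.length_eq_zero_iff.mp (Nat.le_zero.mp hlen)) hne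
  | succ N ih =>
    intro S hlen hsp hds hne
    obtain ⟨a, rest, rfl⟩ := List.exists_cons_of_ne_nil hne
    by_cases ha : a ∈ rest
    · obtain ⟨I, rest', rfl, hIa⟩ := first_occ_split ha
      -- I is nonempty by sparseness
      have hIne : I ≠ [] := by
        intro h
        subst h
        have := (List.isChain_cons_cons.mp hsp).1
        simp at this
      -- key claim: symbols of I do not appear in a :: rest'
      have hkey : ∀ b ∈ I, b ∉ rest' := by
        intro b hbI hbr
        have hba : b ≠ a := hIa b hbI
        apply hds a b hba.symm.symm.symm  -- a ≠ b
        · show [a, b, a, b] <+ a :: (I ++ a :: rest')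
          refine List.Sublist.cons₂ a ?_
          show [b] ++ (a :: [b]) <+ I ++ (a :: rest')
          exact (List.singleton_sublist.mpr hbI).append
            ((List.singleton_sublist.mpr hbr).cons₂ a)
      -- the two pieces
      have hspI : Sparse2 I := hsp.infix ⟨[a], a :: rest', by simp⟩
      have hdsI : IsDS 2 I := hds.sublist (List.Sublist.trans
        (List.sublist_append_left I (a :: rest')) (List.sublist_cons_self a _))
      have hspS' : Sparse2 (a :: rest') := hsp.suffix ⟨a :: I, by simp⟩
      have hdsS' : IsDS 2 (a :: rest') := hds.sublist
        (List.Sublist.cons₂ a ((List.sublist_cons_self a rest').trans (List.sublist_append_right I (a :: rest'))))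
      have hlenI : I.length ≤ N := by simp at hlen ⊢; omega
      have hIpos : 1 ≤ I.length := List.length_pos_iff.mpr hIne
      have hlenS' : (a :: rest').length ≤ N := by simp at hlen ⊢; omega
      have bI := ih I hlenI hspI hdsI hIne
      have bS' := ih (a :: rest') hlenS' hspS' hdsS' (by simp)
      -- cardinalities
      have hdisj : Disjoint I.toFinset (a :: rest').toFinset := by
        rw [Finset.disjoint_left]
        intro b hbI hbS'
        rw [List.mem_toFinset] at hbI hbS'
        rcases List.mem_cons.mp hbS' with rfl | hb
        · exact hIa b hbI rfl
        · exact hkey b hbI hb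
      have hunion : (a :: (I ++ a :: rest')).toFinset = I.toFinset ∪ (a :: rest').toFinset := by
        ext x
        simp [List.mem_toFinset, or_comm, or_assoc, or_left_comm]
      have hcard : (a :: (I ++ a :: rest')).toFinset.card
          = I.toFinset.card + (a :: rest').toFinset.card := by
        rw [hunion, Finset.card_union_of_disjoint hdisj]
      simp only [List.length_cons, List.length_append] at *
      omega
    · have hcard : (a :: rest).toFinset.card = rest.toFinset.card + 1 := by
        simp only [List.toFinset_cons]
        rw [Finset.card_insert_of_notMem (by simpa using ha)]
      by_cases hr : rest = []
      · subst hr; simp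
      · have hlen' : rest.length ≤ N := by simp at hlen; omega
        have := ih rest hlen' hsp.tail (hds.sublist (List.sublist_cons_self a rest)) hr
        simp only [List.length_cons, hcard]
        omega


lemma lam2_blocked {S : List ℕ} {m : ℕ} (hds : IsDS 2 S) (hbl : Blocked m S) (hm : 1 ≤ m) :
    S.length ≤ 2 * S.toFinset.card + (m - 1) := by
  obtain ⟨T, hsub, hsp, hlen, hne⟩ := collapse hbl
  by_cases hS : S = []
  · simp [hS]
  · have hT := sparse_lam2 T.length T le_rfl hsp (hds.sublist hsub) (hne hS)
    have hc : T.toFinset.card ≤ S.toFinset.card :=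
      Finset.card_le_card (fun x hx => by
        rw [List.mem_toFinset] at hx ⊢; exact hsub.mem hx)
    omega

lemma altList_ne_nil (k a b : ℕ) : altList (k+1) a b ≠ [] := by
  simp [altList]


lemma toFinset_filter_mem (L : List ℕ) (F : Finset ℕ) :
    (L.filter (fun x => decide (x ∈ F))).toFinset = L.toFinset ∩ F := by
  ext x
  simp [List.mem_filter]

lemma nodup_of_blocked_one {S : List ℕ} (h : Blocked 1 S) : S.Nodup := by
  obtain ⟨Bs, hlen, hnd, rfl⟩ := h
  match Bs, hlen with
  | [], _ => simp
  | [B], _ => simpa using hnd B (by simp)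

/-- Main induction: order `t+2`, `m ≤ 2^j` blocks. -/
lemma main_bound (t : ℕ) : ∀ j : ℕ, ∀ S : List ℕ, ∀ m : ℕ, IsDS (t+2) S → Blocked m S →
    1 ≤ m → m ≤ 2^j → S.length ≤ 2^(t+1) * S.toFinset.card + j^t * (m-1) := by
  induction t with
  | zero =>
    intro j S m hds hbl hm1 hm2
    have := lam2_blocked hds hbl hm1
    simpa using this
  | succ t iht =>
    intro j
    induction j with
    | zero =>
      intro S m hds hbl hm1 hm2
      have hm : m = 1 := le_antisymm (by simpa using hm2) hm1
      subst hm
      have hnd := nodup_of_blocked_one hbl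
      have : S.toFinset.card = S.length := List.toFinset_card_of_nodup hnd
      rw [this]
      have : 1 ≤ 2^(t+1+1) := Nat.one_le_two_pow
      calc S.length = 1 * S.length := (one_mul _).symm
        _ ≤ 2^(t+1+1) * S.length + _ := by
            exact le_add_right (Nat.mul_le_mul_right _ this)
    | succ j ihj =>
      intro S m hds hbl hm1 hm2
      by_cases hsmall : m ≤ 2^j
      · have := ihj S m hds hbl hm1 hsmall
        refine this.trans ?_
        have : j^(t+1) ≤ (j+1)^(t+1) := Nat.pow_le_pow_left (by omega) _
        exact Nat.add_le_add_left (Nat.mul_le_mul_right _ this) _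
      · -- split
        push_neg at hsmall
        obtain ⟨Bs, hlen, hnd, rfl⟩ := hbl
        set k := 2^j with hk
        set L := (Bs.take k).flatten with hL
        set R := (Bs.drop k).flatten with hR
        have hLR : Bs.flatten = L ++ R := by
          rw [hL, hR, ← List.flatten_append, List.take_append_drop]
        have hkpos : 1 ≤ k := Nat.one_le_two_pow
        have hblL : Blocked k L :=
          ⟨Bs.take k, by rw [List.length_take]; exact min_le_left _ _,
           fun B hB => hnd B (List.mem_of_mem_take hB), rfl⟩
        have hblR : Blocked (m - k) R :=
          ⟨Bs.drop k, by simp [List.length_drop]; omega,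
           fun B hB => hnd B (List.mem_of_mem_drop hB), rfl⟩
        have hmR1 : 1 ≤ m - k := by omega
        have hmR2 : m - k ≤ 2^j := by
          have : (2:ℕ)^(j+1) = 2^j + 2^j := by ring
          omega
        -- filters
        set pG : ℕ → Bool := fun x => decide (x ∈ R.toFinset) with hpG
        set qG : ℕ → Bool := fun x => decide (x ∈ L.toFinset) with hqG
        set Lg := L.filter pG with hLg
        set Ll := L.filter (fun x => ! pG x) with hLl
        set Rg := R.filter qG with hRg
        set Rl := R.filter (fun x => ! qG x) with hRl
        have hdsLR : IsDS (t+1+2) (L ++ R) := by rw [← hLR]; exact hds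
        -- DS properties
        have hdsL : IsDS (t+1+2) L := hdsLR.sublist (List.sublist_append_left L R)
        have hdsR : IsDS (t+1+2) R := hdsLR.sublist (List.sublist_append_right L R)
        have hdsLl : IsDS (t+1+2) Ll := hdsL.sublist (List.filter_sublist (l := L))
        have hdsRl : IsDS (t+1+2) Rl := hdsR.sublist (List.filter_sublist (l := R))
        have hdsLg : IsDS (t+2) Lg := by
          have := globals_left (s := t+2) (by omega) (L := L) (R := R) hdsLR
          exact this
        have hdsRg : IsDS (t+2) Rg := globals_right (s := t+2) (L := L) (R := R) hdsLR
        -- blocked properties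
        have hblLl : Blocked k Ll := hblL.filter _
        have hblLg : Blocked k Lg := hblL.filter _
        have hblRl : Blocked (m-k) Rl := hblR.filter _
        have hblRg : Blocked (m-k) Rg := hblR.filter _
        -- apply IHs
        have bLl := ihj Ll k hdsLl hblLl hkpos le_rfl
        have bRl := ihj Rl (m-k) hdsRl hblRl hmR1 hmR2
        have bLg := iht j Lg k hdsLg hblLg hkpos le_rfl
        have bRg := iht j Rg (m-k) hdsRg hblRg hmR1 hmR2
        -- lengths
        have hlenL : Lg.length + Ll.length = L.length := length_filter_partition pG L
        have hlenR : Rg.length + Rl.length = R.length := length_filter_partition qG R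
        have hlenS : (Bs.flatten).length = L.length + R.length := by
          rw [hLR]; simp
        -- cardinalities
        set LF := L.toFinset with hLF
        set RF := R.toFinset with hRF
        have hcLg : Lg.toFinset = LF ∩ RF := toFinset_filter_mem L RF
        have hcRg : Rg.toFinset = RF ∩ LF := toFinset_filter_mem R LF
        have hcLl : Ll.toFinset = LF \ RF := by
          ext x
          simp only [List.mem_toFinset, hLl, List.mem_filter, hpG, Finset.mem_sdiff,
            Bool.not_eq_true', decide_eq_false_iff_not, hRF, hLF, List.mem_toFinset]
        have hcRl : Rl.toFinset = RF \ LF := by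
          ext x
          simp only [List.mem_toFinset, hRl, List.mem_filter, hqG, Finset.mem_sdiff,
            Bool.not_eq_true', decide_eq_false_iff_not, hRF, hLF, List.mem_toFinset]
        have hcS : (Bs.flatten).toFinset = LF ∪ RF := by
          rw [hLR]; simp [hLF, hRF]
        -- card arithmetic
        have e1 : (LF \ RF).card + RF.card = (LF ∪ RF).card := Finset.card_sdiff_add_card LF RF
        have e2 : (RF ∩ LF).card + (RF \ LF).card = RF.card := Finset.card_inter_add_card_sdiff RF LF
        have e3 : (LF ∩ RF).card = (RF ∩ LF).card := by rw [Finset.inter_comm]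
        -- put it together
        rw [hlenS, hcS]
        rw [hcLg] at bLg; rw [hcRg] at bRg; rw [hcLl] at bLl; rw [hcRl] at bRl
        rw [Finset.inter_comm] at bLg
        set A := (LF \ RF).card with hA
        set B := (RF \ LF).card with hB
        set C := (RF ∩ LF).card with hC
        have e1 : A + RF.card = (LF ∪ RF).card := Finset.card_sdiff_add_card LF RF
        have e2 : C + B = RF.card := Finset.card_inter_add_card_sdiff RF LF
        have hABC : A + B + C = (LF ∪ RF).card := by omega
        have hexp : j^(t+1) + j^t ≤ (j+1)^(t+1) := by
          have h2 : j^t * (j+1) ≤ (j+1)^t * (j+1) :=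
            Nat.mul_le_mul_right _ (Nat.pow_le_pow_left (by omega) _)
          calc j^(t+1) + j^t = j^t * (j+1) := by ring
            _ ≤ (j+1)^t * (j+1) := h2
            _ = (j+1)^(t+1) := by ring
        have hP : (2:ℕ)^(t+1+1) = 2 * 2^(t+1) := by rw [pow_succ]; ring
        calc L.length + R.length
            = (Ll.length + Lg.length) + (Rl.length + Rg.length) := by omega
          _ ≤ (2^(t+1+1) * A + j^(t+1) * (k-1) + (2^(t+1) * C + j^t * (k-1)))
              + (2^(t+1+1) * B + j^(t+1) * (m-k-1) + (2^(t+1) * C + j^t * (m-k-1))) :=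
              Nat.add_le_add (Nat.add_le_add bLl bLg) (Nat.add_le_add bRl bRg)
          _ = 2^(t+1+1) * (A + B + C) + (j^(t+1) + j^t) * ((k-1) + (m-k-1)) := by
              rw [hP]; ring
          _ = 2^(t+1+1) * (LF ∪ RF).card + (j^(t+1) + j^t) * (m - 2) := by
              rw [hABC]
              congr 1
              congr 1
              omega
          _ ≤ 2^(t+1+1) * (LF ∪ RF).card + (j+1)^(t+1) * (m - 1) :=
              Nat.add_le_add_left (Nat.mul_le_mul hexp (by omega)) _

/-- For all `s ≥ 2`, `j' ≥ 1`, `n ≥ 1` and `1 ≤ m ≤ 2^{j'}`: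
`λ_s(n,m) ≤ 2^{s−1}·n + j'^{s−2}·(m−1)`. -/
theorem stmt10 (s j' n m : ℕ) (hs : 2 ≤ s) (hj : 1 ≤ j')
    (hm1 : 1 ≤ m) (hm2 : m ≤ 2 ^ j') (hn : 1 ≤ n) :
    lamB s n m ≤ 2 ^ (s - 1) * n + j' ^ (s - 2) * (m - 1) := by
  apply csSup_le
  · refine ⟨0, ⟨[], ?_, by simp, ⟨[], by simp, by simp, by simp⟩, rfl⟩⟩
    intro a b hab hsub
    exact altList_ne_nil (s+1) a b (List.sublist_nil.mp hsub)
  · rintro l ⟨S, hds, hcard, hbl, rfl⟩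
    obtain ⟨t, rfl⟩ : ∃ t, s = t + 2 := ⟨s - 2, by omega⟩
    have hmain := main_bound t j' S m hds hbl hm1 hm2
    show S.length ≤ 2 ^ (t+1) * n + j' ^ t * (m - 1)
    exact hmain.trans (Nat.add_le_add_right (Nat.mul_le_mul_left _ hcard) _)
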